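/- For every odd integer k ≥ 3 there exists a [k,k,1]-graph that has no factor of independent transversals. In fact, the [k,k,1]-graph with parts V_i = {v_{i,1},…,v_{i,k}} whose edges are v_{i,t}v_{j,t} for all 1 ≤ i < j ≤ k and 1 ≤ t ≤ k−2, together with v_{i,k−1}v_{j,k} and v_{i,k}v_{j,k−1} for all 1 ≤ i < j ≤ k, does not admit k pairwise-disjoint independent transversals. (That is, f(k) ≥ k+1 for odd k ≥ 3.) -/

import Mathlib

/-- A `[k,n,1]`-graph: the vertex set is `Fin k × Fin n`, partitioned into the `k` parts
`V_i = {i} × Fin n` (each of size `n`); there are no edges inside any part, and every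
vertex has at most one neighbor in each part (the bipartite graph induced by any pair of
parts is a matching). -/
def IsKN1Graph {k n : ℕ} (G : SimpleGraph (Fin k × Fin n)) : Prop :=
  (∀ u v : Fin k × Fin n, G.Adj u v → u.1 ≠ v.1) ∧
  (∀ u v w : Fin k × Fin n, G.Adj u v → G.Adj u w → v.1 = w.1 → v = w)

/-- An independent transversal, given by choosing the vertex `(i, f i)` in part `V_i`:
the chosen vertices form an independent set. -/
def IsIndepTransversal {k n : ℕ} (G : SimpleGraph (Fin k × Fin n)) (f : Fin k → Fin n) : Prop :=
  ∀ i j : Fin k, ¬ G.Adj (i, f i) (j, f j)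

/-- A factor of independent transversals: `n` pairwise-disjoint independent transversals
(hence covering all vertices). Disjointness is expressed by saying that for each part `i`,
the `n` vertices chosen in `V_i` by the `n` transversals are pairwise distinct. -/
def HasITFactor {k n : ℕ} (G : SimpleGraph (Fin k × Fin n)) : Prop :=
  ∃ T : Fin n → Fin k → Fin n,
    (∀ m : Fin n, IsIndepTransversal G (T m)) ∧
    (∀ i : Fin k, Function.Injective fun m : Fin n => T m i)


section Catlin

variable {k : ℕ}

private def CatlinRel (k : ℕ) (u v : Fin k × Fin k) : Prop :=
  u.1 ≠ v.1 ∧ ((u.2 = v.2 ∧ u.2.val < k - 2) ∨ (u.2.val = k - 2 ∧ v.2.val = k - 1))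

private lemma catlin_adj {u v : Fin k × Fin k} :
    (SimpleGraph.fromRel (CatlinRel k)).Adj u v ↔
      u ≠ v ∧ (CatlinRel k u v ∨ CatlinRel k v u) :=
  SimpleGraph.fromRel_adj _ _ _

/-- The second coordinate of a neighbor is a function of the second coordinate of the vertex. -/
private lemma catlin_nbr (hk : 3 ≤ k) {u v : Fin k × Fin k}
    (h : (SimpleGraph.fromRel (CatlinRel k)).Adj u v) :
    v.2.val = if u.2.val < k - 2 then u.2.val else if u.2.val = k - 2 then k - 1 else k - 2 := by
  have hu := u.2.isLt
  have hv := v.2.isLt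
  rcases catlin_adj.mp h with ⟨-, ⟨-, hA | hB⟩ | ⟨-, hA | hB⟩⟩
  · have h1 := congrArg Fin.val hA.1
    have h2 := hA.2
    split_ifs <;> omega
  · have h1 := hB.1; have h2 := hB.2
    split_ifs <;> omega
  · have h1 := congrArg Fin.val hA.1
    have h2 := hA.2
    split_ifs <;> omega
  · have h1 := hB.1; have h2 := hB.2
    split_ifs <;> omega

/-- Adjacency construction. -/
private lemma catlin_adj_of (hk : 3 ≤ k) {i j a b : Fin k} (hij : i ≠ j)
    (h : (a = b ∧ a.val < k - 2) ∨ (a.val = k - 2 ∧ b.val = k - 1)) :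
    (SimpleGraph.fromRel (CatlinRel k)).Adj (i, a) (j, b) :=
  catlin_adj.mpr ⟨fun hc => hij (congrArg Prod.fst hc), Or.inl ⟨hij, h⟩⟩

private lemma filter_split (p : Fin k → Prop) [DecidablePred p] :
    (Finset.univ.filter p).card + (Finset.univ.filter fun x => ¬ p x).card = k := by
  rw [Finset.card_filter_add_card_filter_not, Finset.card_univ, Fintype.card_fin]

/-- Catlin's construction: for every odd `k ≥ 3`, the `[k,k,1]`-graph whose edges are
`v_{i,t} v_{j,t}` for all `1 ≤ i < j ≤ k` and `1 ≤ t ≤ k−2`, together with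
`v_{i,k−1} v_{j,k}` and `v_{i,k} v_{j,k−1}` for all `1 ≤ i < j ≤ k`
(in our 0-indexed model: edges between `(i, t)` and `(j, t)` for `i ≠ j` and `t < k−2`,
and between `(i, k−2)` and `(j, k−1)` for `i ≠ j`), is indeed a `[k,k,1]`-graph and
does not admit `k` pairwise-disjoint independent transversals. Hence `f(k) ≥ k+1`
for odd `k ≥ 3`. -/
theorem stmt_6 (k : ℕ) (hk : 3 ≤ k) (hodd : Odd k) :
    IsKN1Graph
      (SimpleGraph.fromRel fun u v : Fin k × Fin k =>
        u.1 ≠ v.1 ∧ ((u.2 = v.2 ∧ u.2.val < k - 2) ∨ (u.2.val = k - 2 ∧ v.2.val = k - 1))) ∧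
    ¬ HasITFactor
      (SimpleGraph.fromRel fun u v : Fin k × Fin k =>
        u.1 ≠ v.1 ∧ ((u.2 = v.2 ∧ u.2.val < k - 2) ∨ (u.2.val = k - 2 ∧ v.2.val = k - 1))) := by
  show IsKN1Graph (SimpleGraph.fromRel (CatlinRel k)) ∧
    ¬ HasITFactor (SimpleGraph.fromRel (CatlinRel k))
  constructor
  · constructor
    · intro u v h
      rcases catlin_adj.mp h with ⟨-, h1 | h1⟩
      exacts [h1.1, h1.1.symm]
    · intro u v w huv huw h1
      have h2 := catlin_nbr hk huv
      have h3 := catlin_nbr hk huw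
      exact Prod.ext h1 (Fin.ext (h2.trans h3.symm))
  · rintro ⟨T, hIT, hInj⟩
    have hn2lt : k - 2 < k := by omega
    set n2 : Fin k := ⟨k - 2, hn2lt⟩ with hn2
    have hbij : ∀ i : Fin k, Function.Bijective fun m : Fin k => T m i := fun i =>
      (Finite.injective_iff_bijective).mp (hInj i)
    have hcol : ∀ (i : Fin k) (p : Fin k → Prop) [DecidablePred p],
        (Finset.univ.filter fun m : Fin k => p (T m i)).card =
        (Finset.univ.filter p).card := by
      intro i p _
      apply Finset.card_bij (fun m _ => T m i)
      · intro m hm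
        simp only [Finset.mem_filter, Finset.mem_univ, true_and] at hm ⊢
        exact hm
      · intro a _ b _ hab; exact hInj i hab
      · intro x hx
        obtain ⟨m, hm⟩ := (hbij i).2 x
        refine ⟨m, ?_, hm⟩
        simp only [Finset.mem_filter, Finset.mem_univ, true_and] at hx ⊢
        rwa [show T m i = x from hm]
    -- card of the top-two set in Fin k is 2
    have htop : (Finset.univ.filter fun x : Fin k => k - 2 ≤ x.val).card = 2 := by
      have hset : (Finset.univ.filter fun x : Fin k => k - 2 ≤ x.val) =
          {(⟨k - 2, by omega⟩ : Fin k), ⟨k - 1, by omega⟩} := by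
        ext x
        simp only [Finset.mem_filter, Finset.mem_univ, true_and, Finset.mem_insert,
          Finset.mem_singleton, Fin.ext_iff]
        have := x.isLt; omega
      rw [hset, Finset.card_insert_of_notMem, Finset.card_singleton]
      simp only [Finset.mem_singleton, Fin.ext_iff]
      omega
    have hone : (Finset.univ.filter fun x : Fin k => x = n2).card = 1 := by
      rw [Finset.filter_eq', if_pos (Finset.mem_univ n2), Finset.card_singleton]
    -- B m : parts where transversal m uses a top-two value
    set B : Fin k → Finset (Fin k) :=
      fun m => Finset.univ.filter fun i => k - 2 ≤ (T m i).val with hB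
    have hmemB : ∀ m i, i ∈ B m ↔ k - 2 ≤ (T m i).val := by
      intro m i
      rw [hB]
      simp only [Finset.mem_filter, Finset.mem_univ, true_and]
    -- each B m has at least 2 elements
    have hB2 : ∀ m, 2 ≤ (B m).card := by
      intro m
      have hlow : (Finset.univ.filter fun x : Fin k => x.val < k - 2).card = k - 2 := by
        have h1 := filter_split (fun x : Fin k => k - 2 ≤ x.val)
        have h2 : (Finset.univ.filter fun x : Fin k => ¬ k - 2 ≤ x.val) =
            (Finset.univ.filter fun x : Fin k => x.val < k - 2) := by
          apply Finset.filter_congr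
          intro x _
          simp only [not_le, eq_iff_iff]
        rw [h2, htop] at h1
        omega
      have hsub : (Finset.univ.filter fun i : Fin k => (T m i).val < k - 2).card ≤
          (Finset.univ.filter fun x : Fin k => x.val < k - 2).card := by
        apply Finset.card_le_card_of_injOn (fun i => T m i)
        · intro i hi
          simp only [Finset.mem_coe, Finset.mem_filter, Finset.mem_univ, true_and] at hi ⊢
          exact hi
        · intro i hi j hj hijv
          by_contra hij
          simp only [Finset.coe_filter, Finset.mem_univ, true_and, Set.mem_setOf_eq] at hi
          exact hIT m i j (catlin_adj_of hk hij (Or.inl ⟨hijv, hi⟩))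
      have h1 := filter_split (fun i : Fin k => k - 2 ≤ (T m i).val)
      have h2 : (Finset.univ.filter fun i : Fin k => ¬ k - 2 ≤ (T m i).val) =
          (Finset.univ.filter fun i : Fin k => (T m i).val < k - 2) := by
        apply Finset.filter_congr
        intro x _
        simp only [not_le, eq_iff_iff]
      rw [h2] at h1
      have hBid : (B m).card = (Finset.univ.filter fun i : Fin k => k - 2 ≤ (T m i).val).card :=
        rfl
      omega
    -- total size of the B m is 2k
    have hBsum : ∑ m : Fin k, (B m).card = 2 * k := by
      have hstep : ∀ m : Fin k, (B m).card =
          ∑ i : Fin k, if k - 2 ≤ (T m i).val then 1 else 0 := by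
        intro m; rw [hB, Finset.card_filter]
      rw [Finset.sum_congr rfl fun m _ => hstep m, Finset.sum_comm]
      have hstep2 : ∀ i : Fin k, (∑ m : Fin k, if k - 2 ≤ (T m i).val then 1 else 0) = 2 := by
        intro i
        rw [← Finset.card_filter]
        exact (hcol i (fun x => k - 2 ≤ x.val)).trans htop
      rw [Finset.sum_congr rfl fun i _ => hstep2 i, Finset.sum_const, Finset.card_univ,
        Fintype.card_fin, smul_eq_mul, mul_comm]
    -- hence each B m has exactly 2 elements
    have hB2' : ∀ m, (B m).card = 2 := by
      intro m
      by_contra hne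
      have h3 : 3 ≤ (B m).card := by have := hB2 m; omega
      have hcon : 2 * k + 1 ≤ ∑ m : Fin k, (B m).card := by
        calc 2 * k + 1 ≤ (∑ _m' ∈ Finset.univ.erase m, 2) + 3 := by
              have hcard : (Finset.univ.erase m).card = k - 1 := by
                rw [Finset.card_erase_of_mem (Finset.mem_univ m), Finset.card_univ,
                  Fintype.card_fin]
              rw [Finset.sum_const, hcard, smul_eq_mul]
              omega
          _ ≤ (∑ m' ∈ Finset.univ.erase m, (B m').card) + (B m).card := by
              exact Nat.add_le_add (Finset.sum_le_sum fun m' _ => hB2 m') h3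
          _ = ∑ m : Fin k, (B m).card := Finset.sum_erase_add _ _ (Finset.mem_univ m)
      omega
    -- on B m, the transversal values are constant
    have hconst : ∀ m, ∀ i ∈ B m, ∀ j ∈ B m, T m i = T m j := by
      intro m i hi j hj
      by_contra hne
      have hij : i ≠ j := fun h => hne (h ▸ rfl)
      rw [hmemB] at hi hj
      have hiv := (T m i).isLt
      have hjv := (T m j).isLt
      have hvals : ((T m i).val = k - 2 ∧ (T m j).val = k - 1) ∨
          ((T m j).val = k - 2 ∧ (T m i).val = k - 1) := by
        have hne' : (T m i).val ≠ (T m j).val := fun h => hne (Fin.ext h)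
        omega
      rcases hvals with h | h
      · exact hIT m i j (catlin_adj_of hk hij (Or.inr h))
      · exact hIT m j i (catlin_adj_of hk hij.symm (Or.inr h))
    -- count of parts where transversal m uses value n2
    set c : Fin k → ℕ := fun m => (Finset.univ.filter fun i => T m i = n2).card with hc
    have hceven : ∀ m, Even (c m) := by
      intro m
      rcases Finset.eq_empty_or_nonempty (Finset.univ.filter fun i => T m i = n2) with h | ⟨i, hi⟩
      · have : c m = 0 := by rw [hc]; simp only; rw [h, Finset.card_empty]
        rw [this]; exact Even.zero
      · simp only [Finset.mem_filter, Finset.mem_univ, true_and] at hi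
        have hiB : i ∈ B m := by rw [hmemB, hi, hn2]
        have hsub : B m ⊆ Finset.univ.filter fun i => T m i = n2 := by
          intro j hj
          simp only [Finset.mem_filter, Finset.mem_univ, true_and]
          rw [hconst m j hj i hiB, hi]
        have hsub2 : (Finset.univ.filter fun i => T m i = n2) ⊆ B m := by
          intro j hj
          simp only [Finset.mem_filter, Finset.mem_univ, true_and] at hj
          rw [hmemB, hj, hn2]
        have hcm : c m = 2 := by
          rw [hc]; simp only
          rw [Finset.Subset.antisymm hsub2 hsub]
          exact hB2' m
        rw [hcm]; exact even_two
    have hcsum : ∑ m : Fin k, c m = k := by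
      have hstep : ∀ m : Fin k, c m = ∑ i : Fin k, if T m i = n2 then 1 else 0 := by
        intro m; rw [hc]; simp only; rw [Finset.card_filter]
      rw [Finset.sum_congr rfl fun m _ => hstep m, Finset.sum_comm]
      have hstep2 : ∀ i : Fin k, (∑ m : Fin k, if T m i = n2 then 1 else 0) = 1 := by
        intro i
        rw [← Finset.card_filter]
        exact (hcol i (fun x => x = n2)).trans hone
      rw [Finset.sum_congr rfl fun i _ => hstep2 i, Finset.sum_const, Finset.card_univ,
        Fintype.card_fin, smul_eq_mul, mul_one]
    have heven : Even (∑ m : Fin k, c m) := Finset.even_sum _ fun m _ => hceven m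
    rw [hcsum] at heven
    exact (Nat.not_even_iff_odd.mpr hodd) heven

end Catlin
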